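/- Suppose Σ, Σ' ∈ P(X) are irreducible collections of partial splits and C is an X-cycle. If Σ' is obtained from Σ by a single application of the Y-rule θ_Y, then Σ is displayed by C if and only if Σ' is displayed by C. -/

import Mathlib

/-!
Common definitions: partial splits of a finite set `X`, modelled as unordered
pairs (`Sym2`) of nonempty disjoint subsets of `X`; the `M`-, `Y`- and `Z`-
closure rules; weak compatibility; `X`-cycles and display; split closure
sequences and split closures.
-/

variable {X : Type*}

/-- `S` is a partial split of `X`: an unordered pair of nonempty disjoint subsets of `X`. -/
def IsPartialSplit (S : Sym2 (Set X)) : Prop :=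
  ∃ A B : Set X, S = s(A, B) ∧ A.Nonempty ∧ B.Nonempty ∧ Disjoint A B

/-- `S` is a full split of `X`: a partial split whose two parts cover `X`. -/
def IsFullSplit (S : Sym2 (Set X)) : Prop :=
  ∃ A B : Set X, S = s(A, B) ∧ A.Nonempty ∧ B.Nonempty ∧ Disjoint A B ∧ A ∪ B = Set.univ

/-- The partial split `S` extends the partial split `T`. -/
def SplitExtends (S T : Sym2 (Set X)) : Prop :=
  ∃ A B C D : Set X, S = s(A, B) ∧ T = s(C, D) ∧ C ⊆ A ∧ D ⊆ B

/-- `Sig ⪯ Sig'`: every partial split of `Sig` is extended by one of `Sig'`. -/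
def Preceq (Sig Sig' : Set (Sym2 (Set X))) : Prop :=
  ∀ S ∈ Sig, ∃ T ∈ Sig', SplitExtends T S

/-- `Sig⁻`: the set obtained from `Sig` by removing all redundant partial splits,
i.e. those extended by a different element of `Sig`. -/
def sreduce (Sig : Set (Sym2 (Set X))) : Set (Sym2 (Set X)) :=
  {S | S ∈ Sig ∧ ¬ ∃ T ∈ Sig, T ≠ S ∧ SplitExtends T S}

/-- `Sig ∈ P(X)`: `Sig` is an irreducible collection of partial splits of `X`. -/
def InPX (Sig : Set (Sym2 (Set X))) : Prop :=
  (∀ S ∈ Sig, IsPartialSplit S) ∧ sreduce Sig = Sig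

/-- Two partial splits are compatible if some part of one is disjoint from some part
of the other. -/
def SplitCompatible (S T : Sym2 (Set X)) : Prop :=
  ∃ A B C D : Set X, S = s(A, B) ∧ T = s(C, D) ∧ A ∩ C = ∅

/-- Weak compatibility of a (multi)triple of partial splits: for every choice of parts,
one of the four distinguished triple intersections is empty. -/
def WeaklyCompatTriple (S1 S2 S3 : Sym2 (Set X)) : Prop :=
  ∀ A1 B1 A2 B2 A3 B3 : Set X,
    S1 = s(A1, B1) → S2 = s(A2, B2) → S3 = s(A3, B3) →
    A1 ∩ A2 ∩ A3 = ∅ ∨ B1 ∩ B2 ∩ A3 = ∅ ∨ B1 ∩ A2 ∩ B3 = ∅ ∨ A1 ∩ B2 ∩ B3 = ∅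

/-- A collection of partial splits is weakly compatible if every three of its members are. -/
def WeaklyCompatible (Sig : Set (Sym2 (Set X))) : Prop :=
  ∀ S1 ∈ Sig, ∀ S2 ∈ Sig, ∀ S3 ∈ Sig, WeaklyCompatTriple S1 S2 S3

/-- Condition of the `M`-rule for the parts `A1|B1`, `A2|B2`. -/
def mCond (A1 B1 A2 B2 : Set X) : Prop :=
  (A1 ∩ A2).Nonempty ∧ (B1 ∩ B2).Nonempty

/-- Output of the `M`-rule applied with respect to the parts `A1|B1`, `A2|B2`. -/
def mOut (A1 B1 A2 B2 : Set X) : Set (Sym2 (Set X)) :=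
  {s(A1, B1), s(A2, B2), s(A1 ∩ A2, B1 ∪ B2), s(B1 ∩ B2, A1 ∪ A2)}

/-- Condition of the `Y`-rule for the parts `A1|B1`, `A2|B2`, `A3|B3`. -/
def yCond (A1 B1 A2 B2 A3 B3 : Set X) : Prop :=
  (A1 ∩ A2 ∩ A3).Nonempty ∧ (B1 ∩ B2 ∩ A3).Nonempty ∧
    (B1 ∩ A2 ∩ B3).Nonempty ∧ A1 ∩ B2 ∩ B3 = ∅

/-- Output of the `Y`-rule applied with respect to the parts `A1|B1`, `A2|B2`, `A3|B3`. -/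
def yOut (A1 B1 A2 B2 A3 B3 : Set X) : Set (Sym2 (Set X)) :=
  {s(B1 ∪ (B2 ∩ B3), A1), s(A2 ∪ (A1 ∩ B3), B2), s(A3 ∪ (A1 ∩ B2), B3)}

/-- Condition of the `Z`-rule for the parts `A1|B1`, `A2|B2`. -/
def zCond (A1 B1 A2 B2 : Set X) : Prop :=
  (A1 ∩ A2).Nonempty ∧ (A2 ∩ B1).Nonempty ∧ (B1 ∩ B2).Nonempty ∧ A1 ∩ B2 = ∅

/-- Output of the `Z`-rule applied with respect to the parts `A1|B1`, `A2|B2`. -/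
def zOut (A1 B1 A2 B2 : Set X) : Set (Sym2 (Set X)) :=
  {s(B1 ∪ B2, A1), s(B2, A1 ∪ A2)}

/-- `Sig'` is obtained from `Sig` by a single application of the `Y`-rule. -/
def yStep (Sig Sig' : Set (Sym2 (Set X))) : Prop :=
  ∃ A1 B1 A2 B2 A3 B3 : Set X,
    s(A1, B1) ∈ Sig ∧ s(A2, B2) ∈ Sig ∧ s(A3, B3) ∈ Sig ∧
    s(A1, B1) ≠ s(A2, B2) ∧ s(A1, B1) ≠ s(A3, B3) ∧ s(A2, B2) ≠ s(A3, B3) ∧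
    yCond A1 B1 A2 B2 A3 B3 ∧
    Sig' = sreduce (Sig ∪ yOut A1 B1 A2 B2 A3 B3)

/-- `Sig'` is obtained from `Sig` by a single application of the `M`-rule. -/
def mStep (Sig Sig' : Set (Sym2 (Set X))) : Prop :=
  ∃ A1 B1 A2 B2 : Set X,
    s(A1, B1) ∈ Sig ∧ s(A2, B2) ∈ Sig ∧ s(A1, B1) ≠ s(A2, B2) ∧
    mCond A1 B1 A2 B2 ∧
    Sig' = sreduce (Sig ∪ mOut A1 B1 A2 B2)

/-- `Sig'` is obtained from `Sig` by a single non-trivial application of the `Y`-rule. -/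
def yStepNT (Sig Sig' : Set (Sym2 (Set X))) : Prop :=
  ∃ A1 B1 A2 B2 A3 B3 : Set X,
    s(A1, B1) ∈ Sig ∧ s(A2, B2) ∈ Sig ∧ s(A3, B3) ∈ Sig ∧
    s(A1, B1) ≠ s(A2, B2) ∧ s(A1, B1) ≠ s(A3, B3) ∧ s(A2, B2) ≠ s(A3, B3) ∧
    yCond A1 B1 A2 B2 A3 B3 ∧
    ¬ Preceq (sreduce (yOut A1 B1 A2 B2 A3 B3)) Sig ∧
    Sig' = sreduce (Sig ∪ yOut A1 B1 A2 B2 A3 B3)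

/-- `Sig'` is obtained from `Sig` by a single non-trivial application of the `M`-rule. -/
def mStepNT (Sig Sig' : Set (Sym2 (Set X))) : Prop :=
  ∃ A1 B1 A2 B2 : Set X,
    s(A1, B1) ∈ Sig ∧ s(A2, B2) ∈ Sig ∧ s(A1, B1) ≠ s(A2, B2) ∧
    mCond A1 B1 A2 B2 ∧
    ¬ Preceq (sreduce (mOut A1 B1 A2 B2)) Sig ∧
    Sig' = sreduce (Sig ∪ mOut A1 B1 A2 B2)

/-- `Sig` is closed under the `Y`-rule: every application of the `Y`-rule to `Sig` is trivial. -/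
def yClosed (Sig : Set (Sym2 (Set X))) : Prop :=
  ∀ A1 B1 A2 B2 A3 B3 : Set X,
    s(A1, B1) ∈ Sig → s(A2, B2) ∈ Sig → s(A3, B3) ∈ Sig →
    s(A1, B1) ≠ s(A2, B2) → s(A1, B1) ≠ s(A3, B3) → s(A2, B2) ≠ s(A3, B3) →
    yCond A1 B1 A2 B2 A3 B3 →
    Preceq (sreduce (yOut A1 B1 A2 B2 A3 B3)) Sig

/-- `Sig` is closed under the `M`-rule: every application of the `M`-rule to `Sig` is trivial. -/
def mClosed (Sig : Set (Sym2 (Set X))) : Prop :=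
  ∀ A1 B1 A2 B2 : Set X,
    s(A1, B1) ∈ Sig → s(A2, B2) ∈ Sig → s(A1, B1) ≠ s(A2, B2) →
    mCond A1 B1 A2 B2 →
    Preceq (sreduce (mOut A1 B1 A2 B2)) Sig

/-- A split closure sequence for `Sig` of length `n` with respect to the property `P` and
the non-trivial single-application relation `stepNT`: a strictly `⪯`-increasing sequence
in `P(X)` starting at `Sig` in which every term satisfying `P` is followed by the result
of one non-trivial application of the rule. -/
def IsClosureSeq (P : Set (Sym2 (Set X)) → Prop)
    (stepNT : Set (Sym2 (Set X)) → Set (Sym2 (Set X)) → Prop)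
    (Sig : Set (Sym2 (Set X))) (n : ℕ) (f : ℕ → Set (Sym2 (Set X))) : Prop :=
  f 0 = Sig ∧ (∀ i ≤ n, InPX (f i)) ∧
    (∀ i < n, P (f i) ∧ stepNT (f i) (f (i + 1)) ∧
      Preceq (f i) (f (i + 1)) ∧ f i ≠ f (i + 1))

/-- `cl` is a split closure of `Sig` (with `cl = none` playing the role of `ω`):
the last element of a split closure sequence for `Sig`, which either satisfies `P` and is
closed under the rule, or fails `P`, in which case it is replaced by `ω`. -/
def IsSplitClosure (P : Set (Sym2 (Set X)) → Prop)
    (stepNT : Set (Sym2 (Set X)) → Set (Sym2 (Set X)) → Prop)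
    (closed : Set (Sym2 (Set X)) → Prop)
    (Sig : Set (Sym2 (Set X))) (cl : Option (Set (Sym2 (Set X)))) : Prop :=
  ∃ (n : ℕ) (f : ℕ → Set (Sym2 (Set X))),
    IsClosureSeq P stepNT Sig n f ∧
    ((P (f n) ∧ closed (f n) ∧ cl = some (f n)) ∨ (¬ P (f n) ∧ cl = none))

/-- Split closure with respect to the `Y`-rule, `(P)` being weak compatibility. -/
def IsYClosure (Sig : Set (Sym2 (Set X))) (cl : Option (Set (Sym2 (Set X)))) : Prop :=
  IsSplitClosure WeaklyCompatible yStepNT yClosed Sig cl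

/-- Split closure with respect to the `M`-rule, `(P)` holding for all collections. -/
def IsMClosure (Sig : Set (Sym2 (Set X))) (cl : Option (Set (Sym2 (Set X)))) : Prop :=
  IsSplitClosure (fun _ => True) mStepNT mClosed Sig cl

/-- Split closure with respect to the combined `M/Y`-rule, `(P)` being weak compatibility. -/
def IsMYClosure (Sig : Set (Sym2 (Set X))) (cl : Option (Set (Sym2 (Set X)))) : Prop :=
  IsSplitClosure WeaklyCompatible
    (fun s s' => mStepNT s s' ∨ yStepNT s s') (fun s => mClosed s ∧ yClosed s) Sig cl

/-- `C` is an `X`-cycle: a connected graph on the vertex set `X` (`|X| ≥ 3`) in which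
every vertex has degree `2`. -/
def IsXCycle (C : SimpleGraph X) : Prop :=
  C.Connected ∧ 3 ≤ Nat.card X ∧ ∀ v : X, (C.neighborSet v).ncard = 2

/-- The partial split `S` is displayed by the `X`-cycle `C`: there are two distinct
edges of `C` whose deletion leaves one component containing one part of `S` and
another component containing the other part. -/
def DisplaysSplit (C : SimpleGraph X) (S : Sym2 (Set X)) : Prop :=
  ∃ A B : Set X, S = s(A, B) ∧
    ∃ e1 e2 : Sym2 X, e1 ∈ C.edgeSet ∧ e2 ∈ C.edgeSet ∧ e1 ≠ e2 ∧
      ∃ c1 c2 : (C.deleteEdges {e1, e2}).ConnectedComponent,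
        c1 ≠ c2 ∧ A ⊆ c1.supp ∧ B ⊆ c2.supp

/-- A collection of partial splits is displayed by `C` if each of its members is. -/
def DisplaysColl (C : SimpleGraph X) (Sig : Set (Sym2 (Set X))) : Prop :=
  ∀ S ∈ Sig, DisplaysSplit C S

/-- `cl ≠ ω` and the underlying collection is displayed by `C`. -/
def OptionDisplays (C : SimpleGraph X) (cl : Option (Set (Sym2 (Set X)))) : Prop :=
  ∃ Sig, cl = some Sig ∧ DisplaysColl C Sig

/-- The ground set `A ∪ B` of a partial split `A|B`. -/
def splitGround (S : Sym2 (Set X)) : Set X :=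
  ⋃₀ {A : Set X | A ∈ S}

/-- Membership in `P_ω(X) = P(X) ∪ {ω}`. -/
def InPOmega (x : Option (Set (Sym2 (Set X)))) : Prop :=
  x = none ∨ ∃ Sig, x = some Sig ∧ InPX Sig

/-- The order `⪯` on `P_ω(X)`, with `Sig ⪯ ω` for all `Sig` and `ω ⪯ ω`. -/
def PreceqO (x y : Option (Set (Sym2 (Set X)))) : Prop :=
  y = none ∨ ∃ Sig Sig', x = some Sig ∧ y = some Sig' ∧ Preceq Sig Sig'

/-- Split closure as a relation on `P_ω(X)`, with `⟨ω⟩ = ω`. -/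
def ClosO (cls : Set (Sym2 (Set X)) → Option (Set (Sym2 (Set X))) → Prop)
    (x y : Option (Set (Sym2 (Set X)))) : Prop :=
  (x = none ∧ y = none) ∨ ∃ Sig, x = some Sig ∧ cls Sig y

-- weight of a split
private noncomputable def splitW (S : Sym2 (Set X)) : ℕ :=
  Sym2.lift ⟨fun A B => A.ncard + B.ncard, fun A B => Nat.add_comm _ _⟩ S

private lemma splitW_mk (A B : Set X) : splitW s(A, B) = A.ncard + B.ncard := rfl

private lemma splitExtends_refl (S : Sym2 (Set X)) : SplitExtends S S := by
  induction S using Sym2.ind with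
  | _ A B => exact ⟨A, B, A, B, rfl, rfl, subset_rfl, subset_rfl⟩

private lemma splitExtends_trans {S T U : Sym2 (Set X)} (h1 : SplitExtends S T)
    (h2 : SplitExtends T U) : SplitExtends S U := by
  obtain ⟨A, B, C, D, rfl, rfl, hCA, hDB⟩ := h1
  obtain ⟨A', B', C', D', hT, rfl, hCA', hDB'⟩ := h2
  rw [Sym2.eq_iff] at hT
  rcases hT with ⟨rfl, rfl⟩ | ⟨rfl, rfl⟩
  · exact ⟨A, B, C', D', rfl, rfl, hCA'.trans hCA, hDB'.trans hDB⟩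
  · exact ⟨A, B, D', C', rfl, Sym2.eq_swap, hDB'.trans hCA, hCA'.trans hDB⟩

private lemma splitW_lt [Finite X] {S T : Sym2 (Set X)} (h : SplitExtends T S) (hne : T ≠ S) :
    splitW S < splitW T := by
  obtain ⟨A, B, C, D, rfl, rfl, hCA, hDB⟩ := h
  rw [splitW_mk, splitW_mk]
  have h1 : C.ncard ≤ A.ncard := Set.ncard_le_ncard hCA A.toFinite
  have h2 : D.ncard ≤ B.ncard := Set.ncard_le_ncard hDB B.toFinite
  rcases lt_or_ge (C.ncard + D.ncard) (A.ncard + B.ncard) with h | h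
  · exact h
  · exfalso
    apply hne
    have hC : C = A := Set.eq_of_subset_of_ncard_le hCA (by omega) A.toFinite
    have hD : D = B := Set.eq_of_subset_of_ncard_le hDB (by omega) B.toFinite
    rw [hC, hD]

/-- every member of a finite collection is extended by a member of its reduction -/
private lemma exists_sreduce_extends [Finite X] (Sig : Set (Sym2 (Set X))) {S : Sym2 (Set X)}
    (hS : S ∈ Sig) : ∃ T ∈ sreduce Sig, SplitExtends T S := by
  have hfin : Set.Finite {T | T ∈ Sig ∧ SplitExtends T S} := Set.toFinite _
  obtain ⟨T, ⟨hTmem, hText⟩, hTmax⟩ :=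
    hfin.exists_maximalFor splitW _ ⟨S, hS, splitExtends_refl S⟩
  refine ⟨T, ⟨hTmem, ?_⟩, hText⟩
  rintro ⟨U, hU, hUne, hUext⟩
  have hlt : splitW T < splitW U := splitW_lt hUext hUne
  have := hTmax (show U ∈ {T | T ∈ Sig ∧ SplitExtends T S} from ⟨hU, splitExtends_trans hUext hText⟩) hlt.le
  omega

private lemma displaysSplit_of_extends {C : SimpleGraph X} {S T : Sym2 (Set X)}
    (hT : DisplaysSplit C T) (h : SplitExtends T S) : DisplaysSplit C S := by
  obtain ⟨A, B, C', D, hTeq, hSeq, hCA, hDB⟩ := h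
  obtain ⟨A', B', hTeq', e1, e2, he1, he2, hne, c1, c2, hc, hA, hB⟩ := hT
  rw [hTeq] at hTeq'
  rw [Sym2.eq_iff] at hTeq'
  rcases hTeq' with ⟨rfl, rfl⟩ | ⟨rfl, rfl⟩
  · exact ⟨C', D, hSeq, e1, e2, he1, he2, hne, c1, c2, hc, hCA.trans hA, hDB.trans hB⟩
  · exact ⟨C', D, hSeq, e1, e2, he1, he2, hne, c2, c1, hc.symm, hCA.trans hB, hDB.trans hA⟩

private lemma pair_eq_pair {α : Type*} {a b x y : α} (hxy : x ≠ y)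
    (hx : x ∈ ({a, b} : Set α)) (hy : y ∈ ({a, b} : Set α)) : ({a, b} : Set α) = {x, y} := by
  simp only [Set.mem_insert_iff, Set.mem_singleton_iff] at hx hy
  rcases hx with rfl | rfl <;> rcases hy with rfl | rfl
  · exact absurd rfl hxy
  · rfl
  · exact Set.pair_comm _ _
  · exact absurd rfl hxy

private lemma exists_cycle_equiv [Fintype X] (C : SimpleGraph X) (hC : IsXCycle C) :
    ∃ (p : ℕ) (_ : NeZero p) (F : ZMod p → X), 3 ≤ p ∧ Function.Bijective F ∧
      ∀ i j : ZMod p, C.Adj (F i) (F j) ↔ j = i + 1 ∨ i = j + 1 := by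
  classical
  obtain ⟨hconn, hcard, hdeg⟩ := hC
  have hdeg2 : ∀ v : X, ∃ a b : X, a ≠ b ∧ C.neighborSet v = {a, b} := fun v =>
    Set.ncard_eq_two.mp (hdeg v)
  -- unique continuation
  have key : ∀ u v : X, C.Adj u v → ∃! w, C.Adj v w ∧ w ≠ u := by
    intro u v huv
    obtain ⟨a, b, hab, hnb⟩ := hdeg2 v
    have hu : u ∈ C.neighborSet v := huv.symm
    have hmem : ∀ w, C.Adj v w ↔ w = a ∨ w = b := by
      intro w
      rw [← SimpleGraph.mem_neighborSet, hnb]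
      simp [Set.mem_insert_iff]
    rw [hnb] at hu
    simp only [Set.mem_insert_iff, Set.mem_singleton_iff] at hu
    rcases hu with rfl | rfl
    · refine ⟨b, ⟨(hmem b).mpr (Or.inr rfl), hab.symm⟩, ?_⟩
      rintro w ⟨hw, hwu⟩
      rcases (hmem w).mp hw with rfl | rfl
      · exact absurd rfl hwu
      · rfl
    · refine ⟨a, ⟨(hmem a).mpr (Or.inl rfl), hab⟩, ?_⟩
      rintro w ⟨hw, hwu⟩
      rcases (hmem w).mp hw with rfl | rfl
      · rfl
      · exact absurd rfl hwu
  let nxt : X → X → X := fun u v => if h : C.Adj u v then (key u v h).choose else v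
  have hnxt : ∀ u v, C.Adj u v → C.Adj v (nxt u v) ∧ nxt u v ≠ u := by
    intro u v h
    simp only [nxt, dif_pos h]
    exact (key u v h).choose_spec.1
  have hXne : Nonempty X := by
    rw [Nat.card_eq_fintype_card] at hcard
    exact Fintype.card_pos_iff.mp (by omega)
  obtain ⟨x0⟩ := hXne
  obtain ⟨a0, b0, hab0, hnb0⟩ := hdeg2 x0
  have ha0 : C.Adj x0 a0 := by
    have : a0 ∈ C.neighborSet x0 := by rw [hnb0]; exact Set.mem_insert _ _
    exact this
  -- the non-backtracking walk
  let g : ℕ → X × X := fun n => Nat.rec (x0, a0) (fun _ q => (q.2, nxt q.1 q.2)) n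
  let f : ℕ → X := fun n => (g n).1
  have hadjg : ∀ n, C.Adj (g n).1 (g n).2 := by
    intro n
    induction n with
    | zero => exact ha0
    | succ n ih => exact (hnxt _ _ ih).1
  have hadjf : ∀ n, C.Adj (f n) (f (n + 1)) := fun n => hadjg n
  have hrec : ∀ n, f (n + 2) = nxt (f n) (f (n + 1)) := fun n => rfl
  have hne2 : ∀ n, f (n + 2) ≠ f n := by
    intro n
    rw [hrec]
    exact (hnxt _ _ (hadjf n)).2
  have hnbrf : ∀ n, C.neighborSet (f (n + 1)) = {f n, f (n + 2)} := by
    intro n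
    obtain ⟨a, b, hab, hnb⟩ := hdeg2 (f (n + 1))
    rw [hnb]
    refine pair_eq_pair (fun h => hne2 n h.symm) ?_ ?_
    · rw [← hnb]; exact (hadjf n).symm
    · rw [← hnb]; exact hadjf (n + 1)
  have mempair : ∀ {x y z : X}, x ∈ ({y, z} : Set X) → x = y ∨ x = z := by
    intro x y z h
    simpa [Set.mem_insert_iff, Set.mem_singleton_iff] using h
  have D1 : ∀ m n, f m = f n → f (m + 1) = f (n + 1) → f (m + 2) = f (n + 2) := by
    intro m n h0 h1
    have hs : ({f m, f (m + 2)} : Set X) = {f n, f (n + 2)} := by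
      rw [← hnbrf m, ← hnbrf n, h1]
    have hm : f (m + 2) ∈ ({f n, f (n + 2)} : Set X) := by
      rw [← hs]; exact Set.mem_insert_of_mem _ rfl
    rcases mempair hm with h | h
    · exact absurd (h.trans h0.symm) (hne2 m)
    · exact h
  have D2 : ∀ m n, f (m + 1) = f (n + 1) → f (m + 2) = f (n + 2) → f m = f n := by
    intro m n h1 h2
    have hs : ({f m, f (m + 2)} : Set X) = {f n, f (n + 2)} := by
      rw [← hnbrf m, ← hnbrf n, h1]
    have hm : f m ∈ ({f n, f (n + 2)} : Set X) := by
      rw [← hs]; exact Set.mem_insert _ _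
    rcases mempair hm with h | h
    · exact h
    · exact absurd (h2.trans h.symm) (hne2 m)
  -- propagation of periods
  have propagate : ∀ (q m : ℕ), f (m + q) = f m → f (m + q + 1) = f (m + 1) →
      ∀ j, f (j + q) = f j := by
    intro q m hm0 hm1
    have congrf : ∀ {a b : ℕ}, a = b → f a = f b := fun h => by rw [h]
    have per1 : f (m + 1 + q) = f (m + 1) :=
      (congrf (by omega : m + 1 + q = m + q + 1)).trans hm1
    have down : ∀ j, f (j + 1 + q) = f (j + 1) → f (j + 2 + q) = f (j + 2) →
        f (j + q) = f j := by
      intro j h1 h2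
      exact D2 (j + q) j ((congrf (by omega : j + q + 1 = j + 1 + q)).trans h1)
        ((congrf (by omega : j + q + 2 = j + 2 + q)).trans h2)
    have up : ∀ j, f (j + q) = f j → f (j + 1 + q) = f (j + 1) →
        f (j + 2 + q) = f (j + 2) := by
      intro j h1 h2
      exact (congrf (by omega : j + 2 + q = j + q + 2)).trans
        (D1 (j + q) j h1 ((congrf (by omega : j + q + 1 = j + 1 + q)).trans h2))
    have hdown : ∀ i, f (m - i + q) = f (m - i) ∧ f (m - i + 1 + q) = f (m - i + 1) := by
      intro i
      induction i with
      | zero => exact ⟨by simpa using hm0, by simpa using per1⟩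
      | succ i ih =>
        rcases le_or_gt (i + 1) m with h | h
        · obtain ⟨p1, p2⟩ := ih
          have h1 : m - i = m - (i + 1) + 1 := by omega
          have h2 : m - i + 1 = m - (i + 1) + 2 := by omega
          refine ⟨down _ (by rw [← h1]; exact p1) (by rw [← h2]; exact p2), ?_⟩
          rw [← h1]; exact p1
        · have h1 : m - (i + 1) = m - i := by omega
          rw [h1]; exact ih
    have h0 : f (0 + q) = f 0 ∧ f (0 + 1 + q) = f (0 + 1) := by
      have := hdown m
      simpa using this
    have hup : ∀ j, f (j + q) = f j ∧ f (j + 1 + q) = f (j + 1) := by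
      intro j
      induction j with
      | zero => exact h0
      | succ j ih => exact ⟨ih.2, up j ih.1 ih.2⟩
    exact fun j => (hup j).1
  -- existence of a period
  have hPex : ∃ q, 0 < q ∧ ∀ j, f (j + q) = f j := by
    obtain ⟨m, n, hmn, hpair⟩ := Finite.exists_ne_map_eq_of_infinite
      (fun n : ℕ => (f n, f (n + 1)))
    rw [Prod.ext_iff] at hpair
    obtain ⟨h0, h1⟩ := hpair
    rcases Nat.lt_or_ge m n with h | h
    · refine ⟨n - m, by omega, propagate (n - m) m ?_ ?_⟩
      · have e : m + (n - m) = n := by omega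
        rw [e]; exact h0.symm
      · have e : m + (n - m) + 1 = n + 1 := by omega
        rw [e]; exact h1.symm
    · have h' : n < m := by omega
      refine ⟨m - n, by omega, propagate (m - n) n ?_ ?_⟩
      · have e : n + (m - n) = m := by omega
        rw [e]; exact h0
      · have e : n + (m - n) + 1 = m + 1 := by omega
        rw [e]; exact h1
  set p := Nat.find hPex with hpdef
  obtain ⟨hppos, hpper⟩ : 0 < p ∧ ∀ j, f (j + p) = f j := Nat.find_spec hPex
  have hpmin : ∀ q, 0 < q → (∀ j, f (j + q) = f j) → p ≤ q := fun q h1 h2 =>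
    Nat.find_min' hPex ⟨h1, h2⟩
  have hpmul : ∀ t j, f (j + p * t) = f j := by
    intro t
    induction t with
    | zero => simp
    | succ t ih =>
      intro j
      have e : j + p * (t + 1) = j + p * t + p := by ring
      rw [e, hpper, ih]
  have hdvd : ∀ q, 0 < q → (∀ j, f (j + q) = f j) → p ∣ q := by
    intro q hq hper
    have hr : ∀ j, f (j + q % p) = f j := by
      intro j
      have h1 : f (j + q % p + p * (q / p)) = f (j + q % p) := hpmul _ _
      have h2 : j + q % p + p * (q / p) = j + q := by
        have := Nat.mod_add_div q p
        omega
      rw [h2] at h1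
      rw [← h1, hper]
    rcases Nat.eq_zero_or_pos (q % p) with h | h
    · exact Nat.dvd_of_mod_eq_zero h
    · have := hpmin _ h hr
      have : q % p < p := Nat.mod_lt _ hppos
      omega
  have hcong : ∀ m n, f m = f n → f (m + 1) = f (n + 1) → m % p = n % p := by
    have aux : ∀ m n, m ≤ n → f m = f n → f (m + 1) = f (n + 1) → m % p = n % p := by
      intro m n hmn h0 h1
      rcases Nat.eq_or_lt_of_le hmn with rfl | h
      · rfl
      · have hper : ∀ j, f (j + (n - m)) = f j := by
          apply propagate (n - m) m
          · have e : m + (n - m) = n := by omega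
            rw [e]; exact h0.symm
          · have e : m + (n - m) + 1 = n + 1 := by omega
            rw [e]; exact h1.symm
        have hd := hdvd (n - m) (by omega) hper
        exact (Nat.modEq_iff_dvd' hmn).mpr hd
    intro m n h0 h1
    rcases Nat.le_total m n with h | h
    · exact aux m n h h0 h1
    · exact (aux n m h h0.symm h1.symm).symm
  haveI : NeZero p := ⟨hppos.ne'⟩
  have hmodf : ∀ n, f (n % p) = f n := by
    intro n
    have h1 : f (n % p + p * (n / p)) = f (n % p) := hpmul _ _
    have h2 : n % p + p * (n / p) = n := by
      have := Nat.mod_add_div n p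
      omega
    rw [h2] at h1
    exact h1.symm
  set F : ZMod p → X := fun i => f i.val with hFdef
  have hFadd : ∀ (i : ZMod p) (k : ℕ), F (i + (k : ZMod p)) = f (i.val + k) := by
    intro i k
    have hv : (i + (k : ZMod p)).val = (i.val + k) % p := by
      rw [ZMod.val_add, ZMod.val_natCast]
      conv_lhs => rw [← Nat.mod_eq_of_lt (ZMod.val_lt i)]
      exact (Nat.add_mod _ _ _).symm
    show f (i + (k : ZMod p)).val = f (i.val + k)
    rw [hv, hmodf]
  have hF1 : ∀ i : ZMod p, F (i + 1) = f (i.val + 1) := by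
    intro i
    have := hFadd i 1
    rwa [Nat.cast_one] at this
  have hF2 : ∀ i : ZMod p, F (i + 2) = f (i.val + 2) := by
    intro i
    have := hFadd i 2
    rwa [Nat.cast_ofNat] at this
  have hnbrF : ∀ i : ZMod p, C.neighborSet (F (i + 1)) = {F i, F (i + 2)} ∧
      F i ≠ F (i + 2) ∧ C.Adj (F i) (F (i + 1)) := by
    intro i
    rw [hF1, hF2]
    exact ⟨hnbrf i.val, fun h => hne2 i.val h.symm, hadjf i.val⟩
  have hnbrF' : ∀ i : ZMod p, C.neighborSet (F i) = {F (i - 1), F (i + 1)} ∧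
      F (i - 1) ≠ F (i + 1) ∧ C.Adj (F (i - 1)) (F i) := by
    intro i
    have := hnbrF (i - 1)
    rwa [show i - 1 + 1 = i by ring, show i - 1 + 2 = i + 1 by ring] at this
  have pairinj : ∀ u v : ZMod p, F u = F v → F (u + 1) = F (v + 1) → u = v := by
    intro u v h1 h2
    rw [hF1, hF1] at h2
    have := hcong u.val v.val h1 h2
    rw [Nat.mod_eq_of_lt (ZMod.val_lt u), Nat.mod_eq_of_lt (ZMod.val_lt v)] at this
    exact ZMod.val_injective p this
  have hinj : Function.Injective F := by
    intro u v huv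
    by_contra hne
    have hne1 : F (u + 1) ≠ F (v + 1) := fun h => hne (pairinj _ _ huv h)
    -- F (u+1) = F (v-1) and F (v+1) = F (u-1)
    have hu1 : F (u + 1) = F (v - 1) := by
      have hmem : F (u + 1) ∈ C.neighborSet (F u) := (hnbrF u).2.2
      rw [huv, (hnbrF' v).1] at hmem
      rcases mempair hmem with h | h
      · exact h
      · exact absurd h hne1
    have hv1 : F (v + 1) = F (u - 1) := by
      have hmem : F (v + 1) ∈ C.neighborSet (F v) := (hnbrF v).2.2
      rw [← huv, (hnbrF' u).1] at hmem
      rcases mempair hmem with h | h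
      · exact h
      · exact absurd h.symm hne1
    have rev : ∀ k : ℕ, F (v + (k : ZMod p)) = F (u - (k : ZMod p)) ∧
        F (v + ((k + 1 : ℕ) : ZMod p)) = F (u - ((k + 1 : ℕ) : ZMod p)) := by
      intro k
      induction k with
      | zero =>
        constructor
        · simpa using huv.symm
        · have : F (v + 1) = F (u - 1) := hv1
          simpa using this
      | succ k ih =>
        obtain ⟨ih1, ih2⟩ := ih
        refine ⟨ih2, ?_⟩
        have eA1 : v + ((k + 1 : ℕ) : ZMod p) = (v + (k : ZMod p)) + 1 := by
          push_cast; ring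
        have eA2 : v + ((k + 2 : ℕ) : ZMod p) = (v + (k : ZMod p)) + 2 := by
          push_cast; ring
        have eB0 : (u - ((k + 2 : ℕ) : ZMod p)) + 1 = u - ((k + 1 : ℕ) : ZMod p) := by
          push_cast; ring
        have eB2 : (u - ((k + 2 : ℕ) : ZMod p)) + 2 = u - (k : ZMod p) := by
          push_cast; ring
        have A := hnbrF (v + (k : ZMod p))
        have B := hnbrF (u - ((k + 2 : ℕ) : ZMod p))
        rw [eB0, eB2] at B
        have hcc : ({F (v + (k : ZMod p)), F ((v + (k : ZMod p)) + 2)} : Set X) =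
            {F (u - ((k + 2 : ℕ) : ZMod p)), F (u - (k : ZMod p))} := by
          rw [← A.1, ← B.1, ← eA1, ih2]
        have hmem : F ((v + (k : ZMod p)) + 2) ∈
            ({F (u - ((k + 2 : ℕ) : ZMod p)), F (u - (k : ZMod p))} : Set X) := by
          rw [← hcc]; exact Set.mem_insert_of_mem _ rfl
        rw [← eA2] at hmem
        rcases mempair hmem with h | h
        · exact h
        · exact absurd (ih1.trans (h.symm.trans (congrArg F eA2))) A.2.1
    -- derive a contradiction from rev
    set d : ZMod p := u - v with hddef
    have hd : d ≠ 0 := sub_ne_zero.mpr (fun h => hne h)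
    have hud : u = v + d := by rw [hddef]; ring
    rcases Nat.even_or_odd d.val with ⟨t, ht⟩ | ⟨t, ht⟩
    · -- even : d.val = t + t
      have h2t : ((t + t : ℕ) : ZMod p) = d := by
        rw [← ht, ZMod.natCast_zmod_val]
      have hut : u - (t : ZMod p) = v + (t : ZMod p) := by
        rw [hud, ← h2t]; push_cast; ring
      have hut1 : u - ((t + 1 : ℕ) : ZMod p) = (v + (t : ZMod p)) - 1 := by
        rw [hud, ← h2t]; push_cast; ring
      have hvt1 : v + ((t + 1 : ℕ) : ZMod p) = (v + (t : ZMod p)) + 1 := by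
        push_cast; ring
      have := (rev t).2
      rw [hut1, hvt1] at this
      set m := v + (t : ZMod p)
      have hm := hnbrF (m - 1)
      rw [show m - 1 + 1 = m by ring, show m - 1 + 2 = m + 1 by ring] at hm
      exact hm.2.1 this.symm
    · -- odd : d.val = 2 * t + 1
      have h2t : ((2 * t + 1 : ℕ) : ZMod p) = d := by
        rw [← ht, ZMod.natCast_zmod_val]
      have hut : u - ((t + 1 : ℕ) : ZMod p) = v + (t : ZMod p) := by
        rw [hud, ← h2t]; push_cast; ring
      have hvt1 : v + ((t + 1 : ℕ) : ZMod p) = (v + (t : ZMod p)) + 1 := by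
        push_cast; ring
      have := (rev t).2
      rw [hut, hvt1] at this
      set m := v + (t : ZMod p)
      have hadjm : C.Adj (F m) (F (m + 1)) := (hnbrF m).2.2
      rw [this] at hadjm
      exact C.irrefl hadjm
  have hsurj : Function.Surjective F := by
    have hstep : ∀ x y : X, C.Adj x y → x ∈ Set.range F → y ∈ Set.range F := by
      rintro x y hxy ⟨i, rfl⟩
      have hmem : y ∈ C.neighborSet (F i) := hxy
      rw [(hnbrF' i).1] at hmem
      rcases mempair hmem with h | h
      · exact ⟨i - 1, h.symm⟩
      · exact ⟨i + 1, h.symm⟩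
    have hwalk : ∀ (x y : X), C.Walk x y → x ∈ Set.range F → y ∈ Set.range F := by
      intro x y w
      induction w with
      | nil => exact id
      | cons h w ih => exact fun hx => ih (hstep _ _ h hx)
    intro y
    obtain ⟨w⟩ := hconn.preconnected (F 0) y
    exact hwalk (F 0) y w ⟨0, rfl⟩
  have hadjF : ∀ i j : ZMod p, C.Adj (F i) (F j) ↔ j = i + 1 ∨ i = j + 1 := by
    intro i j
    constructor
    · intro h
      have hmem : F j ∈ C.neighborSet (F i) := h
      rw [(hnbrF' i).1] at hmem
      rcases mempair hmem with h' | h'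
      · right
        have := hinj h'
        rw [this]; ring
      · left; exact hinj h'
    · rintro (rfl | rfl)
      · exact (hnbrF i).2.2
      · exact ((hnbrF j).2.2).symm
  have hp3 : 3 ≤ p := by
    have hcards : Nat.card (ZMod p) = Nat.card X := Nat.card_eq_of_bijective F ⟨hinj, hsurj⟩
    rw [Nat.card_zmod] at hcards
    omega
  exact ⟨p, ⟨hppos.ne'⟩, F, hp3, ⟨hinj, hsurj⟩, hadjF⟩

/-- membership in the open arc strictly between the two deleted edges -/
private def inArc {p : ℕ} (a c u : ZMod p) : Prop := (u - (a + 1)).val < (c - a).val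

private lemma arc_compl {p : ℕ} [NeZero p] {a c : ZMod p} (h : a ≠ c) (u : ZMod p) :
    inArc c a u ↔ ¬ inArc a c u := by
  have hd : c - a ≠ 0 := sub_ne_zero.mpr (Ne.symm h)
  have hdv : (c - a).val ≠ 0 := fun h0 => hd ((ZMod.val_eq_zero _).mp h0)
  have hdlt : (c - a).val < p := ZMod.val_lt _
  have hwlt : (u - (a + 1)).val < p := ZMod.val_lt _
  have e1 : u - (c + 1) = (u - (a + 1)) - (c - a) := by ring
  have e2 : a - c = -(c - a) := by ring
  unfold inArc
  rw [e1, e2, ZMod.neg_val, if_neg hd, sub_eq_add_neg, ZMod.val_add, ZMod.neg_val, if_neg hd]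
  set t := (u - (a + 1)).val
  set d := (c - a).val
  rcases Nat.lt_or_ge t d with h' | h'
  · rw [Nat.mod_eq_of_lt (by omega)]
    omega
  · have e3 : t + (p - d) = p + (t - d) := by omega
    rw [e3, Nat.add_mod_left, Nat.mod_eq_of_lt (by omega)]
    omega

private lemma arc_step {p : ℕ} [NeZero p] (hp1 : 1 < p) {a c u : ZMod p} (hua : u ≠ a)
    (huc : u ≠ c) : inArc a c (u + 1) ↔ inArc a c u := by
  haveI : Fact (1 < p) := ⟨hp1⟩
  have e1 : u + 1 - (a + 1) = (u - (a + 1)) + 1 := by ring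
  set t := (u - (a + 1)).val with htdef
  have htp : t < p := ZMod.val_lt _
  have htne : t ≠ p - 1 := by
    intro h
    apply hua
    have h1 : u - (a + 1) = ((p - 1 : ℕ) : ZMod p) := by
      rw [← h, htdef, ZMod.natCast_zmod_val]
    have hm1 : ((p - 1 : ℕ) : ZMod p) = -1 := by
      rw [Nat.cast_sub (by omega : 1 ≤ p), ZMod.natCast_self, Nat.cast_one, zero_sub]
    rw [hm1] at h1
    linear_combination h1
  have hval : (u + 1 - (a + 1)).val = t + 1 := by
    rw [e1, ZMod.val_add, ZMod.val_one, Nat.mod_eq_of_lt (by omega)]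
  unfold inArc
  rw [hval]
  have hne : t + 1 ≠ (c - a).val := by
    intro h
    apply huc
    have h1 : c - a = ((t + 1 : ℕ) : ZMod p) := by rw [h, ZMod.natCast_zmod_val]
    have h2 : ((t + 1 : ℕ) : ZMod p) = (u - (a + 1)) + 1 := by
      push_cast
      rw [htdef, ZMod.natCast_zmod_val]
    rw [h2] at h1
    linear_combination -h1
  rw [← htdef]
  omega

private lemma edge_eq {p : ℕ} [NeZero p] (hp3 : 3 ≤ p) {F : ZMod p → X}
    (hinj : Function.Injective F) (u a : ZMod p) :
    s(F u, F (u + 1)) = s(F a, F (a + 1)) ↔ u = a := by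
  constructor
  · intro h
    rw [Sym2.eq_iff] at h
    rcases h with ⟨h1, _⟩ | ⟨h1, h2⟩
    · exact hinj h1
    · exfalso
      have e1 : u = a + 1 := hinj h1
      have e2 : u + 1 = a := hinj h2
      have h20 : (2 : ZMod p) = 0 := by linear_combination e2 - e1
      have h2' : ((2 : ℕ) : ZMod p) = 0 := by rw [Nat.cast_ofNat]; exact h20
      rw [ZMod.natCast_eq_zero_iff] at h2'
      have := Nat.le_of_dvd (by norm_num) h2'
      omega
  · rintro rfl; rfl

private lemma arc_reach [Fintype X] {C : SimpleGraph X} {p : ℕ} [NeZero p] (hp3 : 3 ≤ p)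
    {F : ZMod p → X} (hFb : Function.Bijective F)
    (hadj : ∀ i j, C.Adj (F i) (F j) ↔ j = i + 1 ∨ i = j + 1) {a c : ZMod p} (hac : a ≠ c)
    {u : ZMod p} (hu : inArc a c u) :
    (C.deleteEdges {s(F a, F (a + 1)), s(F c, F (c + 1))}).Reachable (F (a + 1)) (F u) := by
  set G := C.deleteEdges {s(F a, F (a + 1)), s(F c, F (c + 1))} with hG
  have hstep : ∀ k : ℕ, k + 1 < p → (k + 1 : ℕ) ≠ (c - a).val →
      G.Adj (F (a + 1 + (k : ZMod p))) (F (a + 1 + ((k + 1 : ℕ) : ZMod p))) := by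
    intro k hk1 hk2
    rw [hG, SimpleGraph.deleteEdges_adj]
    set u' := a + 1 + (k : ZMod p) with hu'def
    have hu1 : a + 1 + ((k + 1 : ℕ) : ZMod p) = u' + 1 := by rw [hu'def]; push_cast; ring
    constructor
    · rw [hu1, hadj]; left; rfl
    · intro hmem
      rw [hu1] at hmem
      simp only [Set.mem_insert_iff, Set.mem_singleton_iff] at hmem
      rcases hmem with h | h
      · have hua : u' = a := (edge_eq hp3 hFb.1 u' a).mp h
        have h0 : ((k + 1 : ℕ) : ZMod p) = 0 := by
          rw [hu'def] at hua
          push_cast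
          linear_combination hua
        rw [ZMod.natCast_eq_zero_iff] at h0
        have := Nat.le_of_dvd (by omega) h0
        omega
      · have huc : u' = c := (edge_eq hp3 hFb.1 u' c).mp h
        have h0 : ((k + 1 : ℕ) : ZMod p) = c - a := by
          rw [hu'def] at huc
          push_cast
          linear_combination huc
        have := congrArg ZMod.val h0
        rw [ZMod.val_cast_of_lt hk1] at this
        exact hk2 this
  have hk : ∀ k : ℕ, k < (c - a).val → G.Reachable (F (a + 1)) (F (a + 1 + (k : ZMod p))) := by
    intro k
    induction k with
    | zero =>
      intro _
      rw [Nat.cast_zero, add_zero]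
    | succ k ih =>
      intro hlt
      have hdp : (c - a).val < p := ZMod.val_lt _
      exact (ih (by omega)).trans (hstep k (by omega) (by omega)).reachable
  have hval : a + 1 + (((u - (a + 1)).val : ℕ) : ZMod p) = u := by
    rw [ZMod.natCast_zmod_val]; ring
  have := hk _ hu
  rwa [hval] at this

private lemma arc_inv [Fintype X] {C : SimpleGraph X} {p : ℕ} [NeZero p] (hp3 : 3 ≤ p)
    {F : ZMod p → X} (hFb : Function.Bijective F)
    (hadj : ∀ i j, C.Adj (F i) (F j) ↔ j = i + 1 ∨ i = j + 1) {a c : ZMod p} {x y : X}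
    (hxy : (C.deleteEdges {s(F a, F (a + 1)), s(F c, F (c + 1))}).Reachable x y)
    {u v : ZMod p} (hu : F u = x) (hv : F v = y) : (inArc a c u ↔ inArc a c v) := by
  set G := C.deleteEdges {s(F a, F (a + 1)), s(F c, F (c + 1))} with hG
  suffices haux : ∀ (x y : X) (w : G.Walk x y) (u v : ZMod p), F u = x → F v = y →
      (inArc a c u ↔ inArc a c v) by
    obtain ⟨w⟩ := hxy
    exact haux x y w u v hu hv
  intro x y w
  induction w with
  | nil =>
    intro u v hu hv
    rw [hFb.1 (hu.trans hv.symm)]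
  | @cons x b y h w ih =>
    intro u v hu hv
    obtain ⟨m, hm⟩ := hFb.2 b
    have hadjstep : inArc a c u ↔ inArc a c m := by
      subst hu
      subst hm
      rw [hG, SimpleGraph.deleteEdges_adj] at h
      obtain ⟨hCadj, hnotmem⟩ := h
      rcases (hadj u m).mp hCadj with h' | h'
      · subst h'
        have hne1 : u ≠ a := fun h0 =>
          hnotmem (Set.mem_insert_iff.mpr (Or.inl (by rw [h0])))
        have hne2 : u ≠ c := fun h0 =>
          hnotmem (Set.mem_insert_iff.mpr (Or.inr (by rw [h0]; rfl)))
        exact (arc_step (by omega) hne1 hne2).symm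
      · subst h'
        have hne1 : m ≠ a := fun h0 => hnotmem (by
          subst h0
          exact Set.mem_insert_iff.mpr (Or.inl Sym2.eq_swap))
        have hne2 : m ≠ c := fun h0 => hnotmem (by
          subst h0
          exact Set.mem_insert_iff.mpr (Or.inr Sym2.eq_swap))
        exact arc_step (by omega) hne1 hne2
    exact hadjstep.trans (ih m v hm hv)

private lemma displays_iff [Fintype X] {C : SimpleGraph X} {p : ℕ} [NeZero p] (hp3 : 3 ≤ p)
    {F : ZMod p → X} (hFb : Function.Bijective F)
    (hadj : ∀ i j : ZMod p, C.Adj (F i) (F j) ↔ j = i + 1 ∨ i = j + 1)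
    {A B : Set X} (hA : A.Nonempty) (hB : B.Nonempty) :
    DisplaysSplit C s(A, B) ↔ ∃ a c : ZMod p, a ≠ c ∧
      (∀ x ∈ A, ∃ u, F u = x ∧ inArc a c u) ∧
      (∀ x ∈ B, ∃ u, F u = x ∧ ¬ inArc a c u) := by
  have hGsym : ∀ a c : ZMod p,
      C.deleteEdges {s(F c, F (c + 1)), s(F a, F (a + 1))} =
      C.deleteEdges {s(F a, F (a + 1)), s(F c, F (c + 1))} := by
    intro a c
    rw [Set.pair_comm]
  constructor
  · rintro ⟨A', B', heq, e1, e2, he1, he2, hne, c1, c2, hc12, hsA', hsB'⟩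
    have hform : ∀ e ∈ C.edgeSet, ∃ a : ZMod p, e = s(F a, F (a + 1)) := by
      intro e he
      induction e using Sym2.ind with
      | _ x y =>
        rw [SimpleGraph.mem_edgeSet] at he
        obtain ⟨i, rfl⟩ := hFb.2 x
        obtain ⟨j, rfl⟩ := hFb.2 y
        rcases (hadj i j).mp he with h' | h'
        · subst h'; exact ⟨i, rfl⟩
        · subst h'; exact ⟨j, Sym2.eq_swap⟩
    obtain ⟨a, rfl⟩ := hform e1 he1
    obtain ⟨c, rfl⟩ := hform e2 he2
    have hac : a ≠ c := fun h => hne (by rw [h])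
    have hA'ne : A'.Nonempty := by
      rcases Sym2.eq_iff.mp heq with ⟨h1, _⟩ | ⟨_, h2⟩
      · rw [← h1]; exact hA
      · rw [← h2]; exact hB
    have hB'ne : B'.Nonempty := by
      rcases Sym2.eq_iff.mp heq with ⟨_, h2⟩ | ⟨h1, _⟩
      · rw [← h2]; exact hB
      · rw [← h1]; exact hA
    obtain ⟨x0, hx0⟩ := hA'ne
    obtain ⟨y0, hy0⟩ := hB'ne
    obtain ⟨u0, hu0⟩ := hFb.2 x0
    obtain ⟨v0, hv0⟩ := hFb.2 y0
    have hnr : ¬ (C.deleteEdges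
        {s(F a, F (a + 1)), s(F c, F (c + 1))}).Reachable x0 y0 := by
      intro h
      apply hc12
      have h1 : _ = c1 := (SimpleGraph.ConnectedComponent.mem_supp_iff _ _).mp (hsA' hx0)
      have h2 : _ = c2 := (SimpleGraph.ConnectedComponent.mem_supp_iff _ _).mp (hsB' hy0)
      rw [← h1, ← h2]
      exact SimpleGraph.ConnectedComponent.sound h
    have hdiff : ¬ (inArc a c u0 ↔ inArc a c v0) := by
      intro hiff
      apply hnr
      by_cases hs : inArc a c u0
      · have hs' : inArc a c v0 := hiff.mp hs
        have r1 := arc_reach hp3 hFb hadj hac hs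
        have r2 := arc_reach hp3 hFb hadj hac hs'
        rw [hu0] at r1
        rw [hv0] at r2
        exact r1.symm.trans r2
      · have hs1 : inArc c a u0 := (arc_compl hac _).mpr hs
        have hs2 : inArc c a v0 := (arc_compl hac _).mpr (fun h => hs (hiff.mpr h))
        have r1 := arc_reach hp3 hFb hadj hac.symm hs1
        have r2 := arc_reach hp3 hFb hadj hac.symm hs2
        rw [hGsym, hu0] at r1
        rw [hGsym, hv0] at r2
        exact r1.symm.trans r2
    have hreachA : ∀ x ∈ A', (C.deleteEdges
        {s(F a, F (a + 1)), s(F c, F (c + 1))}).Reachable x x0 := by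
      intro x hx
      have h1 : _ = c1 := (SimpleGraph.ConnectedComponent.mem_supp_iff _ _).mp (hsA' hx)
      have h2 : _ = c1 := (SimpleGraph.ConnectedComponent.mem_supp_iff _ _).mp (hsA' hx0)
      exact SimpleGraph.ConnectedComponent.exact (h1.trans h2.symm)
    have hreachB : ∀ y ∈ B', (C.deleteEdges
        {s(F a, F (a + 1)), s(F c, F (c + 1))}).Reachable y y0 := by
      intro y hy
      have h1 : _ = c2 := (SimpleGraph.ConnectedComponent.mem_supp_iff _ _).mp (hsB' hy)
      have h2 : _ = c2 := (SimpleGraph.ConnectedComponent.mem_supp_iff _ _).mp (hsB' hy0)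
      exact SimpleGraph.ConnectedComponent.exact (h1.trans h2.symm)
    have core : ∃ a' c' : ZMod p, a' ≠ c' ∧
        (∀ x ∈ A', ∃ u, F u = x ∧ inArc a' c' u) ∧
        (∀ x ∈ B', ∃ u, F u = x ∧ ¬ inArc a' c' u) := by
      by_cases hs : inArc a c u0
      · have hv0s : ¬ inArc a c v0 := fun h => hdiff (iff_of_true hs h)
        refine ⟨a, c, hac, ?_, ?_⟩
        · intro x hx
          obtain ⟨u, hu⟩ := hFb.2 x
          exact ⟨u, hu, (arc_inv hp3 hFb hadj (hreachA x hx) hu hu0).mpr hs⟩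
        · intro y hy
          obtain ⟨v, hv⟩ := hFb.2 y
          exact ⟨v, hv, fun h =>
            hv0s ((arc_inv hp3 hFb hadj (hreachB y hy) hv hv0).mp h)⟩
      · have hv0s : inArc a c v0 := by
          by_contra h
          exact hdiff (iff_of_false hs h)
        refine ⟨c, a, hac.symm, ?_, ?_⟩
        · intro x hx
          obtain ⟨u, hu⟩ := hFb.2 x
          refine ⟨u, hu, (arc_compl hac _).mpr ?_⟩
          exact fun h => hs ((arc_inv hp3 hFb hadj (hreachA x hx) hu hu0).mp h)
        · intro y hy
          obtain ⟨v, hv⟩ := hFb.2 y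
          refine ⟨v, hv, fun hcav => ?_⟩
          exact (arc_compl hac _).mp hcav
            ((arc_inv hp3 hFb hadj (hreachB y hy) hv hv0).mpr hv0s)
    obtain ⟨a', c', hac', hcA, hcB⟩ := core
    rcases Sym2.eq_iff.mp heq with ⟨h1, h2⟩ | ⟨h1, h2⟩
    · subst h1; subst h2
      exact ⟨a', c', hac', hcA, hcB⟩
    · subst h1; subst h2
      refine ⟨c', a', hac'.symm, ?_, ?_⟩
      · intro x hx
        obtain ⟨u, hu, hside⟩ := hcB x hx
        exact ⟨u, hu, (arc_compl hac' _).mpr hside⟩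
      · intro y hy
        obtain ⟨u, hu, hside⟩ := hcA y hy
        exact ⟨u, hu, fun h => (arc_compl hac' _).mp h hside⟩
  · rintro ⟨a, c, hac, hcA, hcB⟩
    refine ⟨A, B, rfl, s(F a, F (a + 1)), s(F c, F (c + 1)), ?_, ?_, ?_,
      (C.deleteEdges _).connectedComponentMk (F (a + 1)),
      (C.deleteEdges _).connectedComponentMk (F (c + 1)), ?_, ?_, ?_⟩
    · exact (hadj a (a + 1)).mpr (Or.inl rfl)
    · exact (hadj c (c + 1)).mpr (Or.inl rfl)
    · exact fun h => hac ((edge_eq hp3 hFb.1 a c).mp h)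
    · intro h
      have hreach := SimpleGraph.ConnectedComponent.exact h
      have hiff := arc_inv hp3 hFb hadj hreach rfl rfl
      have hs1 : inArc a c (a + 1) := by
        unfold inArc
        rw [show a + 1 - (a + 1) = 0 by ring, ZMod.val_zero]
        have : c - a ≠ 0 := sub_ne_zero.mpr (Ne.symm hac)
        have : (c - a).val ≠ 0 := fun h0 => this ((ZMod.val_eq_zero _).mp h0)
        omega
      have hs2 : ¬ inArc a c (c + 1) := by
        unfold inArc
        rw [show c + 1 - (a + 1) = c - a by ring]
        omega
      exact hs2 (hiff.mp hs1)
    · intro x hx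
      obtain ⟨u, hu, hside⟩ := hcA x hx
      rw [SimpleGraph.ConnectedComponent.mem_supp_iff]
      apply SimpleGraph.ConnectedComponent.sound
      have := arc_reach hp3 hFb hadj hac hside
      rw [hu] at this
      exact this.symm
    · intro y hy
      obtain ⟨v, hv, hside⟩ := hcB y hy
      rw [SimpleGraph.ConnectedComponent.mem_supp_iff]
      apply SimpleGraph.ConnectedComponent.sound
      have := arc_reach hp3 hFb hadj hac.symm ((arc_compl hac _).mpr hside)
      rw [hGsym, hv] at this
      exact this.symm

private lemma interval_of_arc {p : ℕ} [NeZero p] {a c w0 : ZMod p} (hac : a ≠ c)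
    (hw0 : ¬ inArc a c w0) : ∃ l r : ℕ, 1 ≤ l ∧ l ≤ r ∧ r ≤ p - 1 ∧
      ∀ u : ZMod p, inArc a c u ↔ (l ≤ (u - w0).val ∧ (u - w0).val ≤ r) := by
  set δ := (c - a).val with hδ
  set e := (w0 - (a + 1)).val with he
  have hδpos : δ ≠ 0 := fun h0 =>
    (sub_ne_zero.mpr (Ne.symm hac)) ((ZMod.val_eq_zero _).mp h0)
  have hδlt : δ < p := ZMod.val_lt _
  have helt : e < p := ZMod.val_lt _
  have heδ : δ ≤ e := by unfold inArc at hw0; omega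
  have hene : e ≠ 0 := by omega
  have hm : w0 - (a + 1) ≠ 0 := fun h0 => hene (by rw [he, h0, ZMod.val_zero])
  refine ⟨p - e, p - e + δ - 1, by omega, by omega, by omega, ?_⟩
  intro u
  set s := (u - (a + 1)).val with hs
  have hslt : s < p := ZMod.val_lt _
  have hψ : (u - w0).val = (s + (p - e)) % p := by
    have e1 : u - w0 = (u - (a + 1)) + -(w0 - (a + 1)) := by ring
    rw [e1, ZMod.val_add, ZMod.neg_val, if_neg hm, ← hs, ← he]
  unfold inArc
  rw [← hs, ← hδ, hψ]
  rcases Nat.lt_or_ge s e with h' | h'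
  · rw [Nat.mod_eq_of_lt (by omega)]
    omega
  · have e3 : s + (p - e) = p + (s - e) := by omega
    rw [e3, Nat.add_mod_left, Nat.mod_eq_of_lt (by omega)]
    omega

private lemma arc_of_interval {p : ℕ} [NeZero p] (hp3 : 3 ≤ p) (w0 : ZMod p) {l r : ℕ}
    (hl : 1 ≤ l) (hlr : l ≤ r) (hr : r ≤ p - 1) :
    ∃ a c : ZMod p, a ≠ c ∧
      ∀ u : ZMod p, inArc a c u ↔ (l ≤ (u - w0).val ∧ (u - w0).val ≤ r) := by
  refine ⟨w0 + (l : ZMod p) - 1, w0 + (l : ZMod p) - 1 + ((r - l + 1 : ℕ) : ZMod p), ?_, ?_⟩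
  · intro h
    have h0 : ((r - l + 1 : ℕ) : ZMod p) = 0 := by linear_combination -h
    rw [ZMod.natCast_eq_zero_iff] at h0
    have := Nat.le_of_dvd (by omega) h0
    omega
  · intro u
    unfold inArc
    have e1 : u - (w0 + (l : ZMod p) - 1 + 1) = (u - w0) + -(l : ZMod p) := by ring
    have e2 : w0 + (l : ZMod p) - 1 + ((r - l + 1 : ℕ) : ZMod p) - (w0 + (l : ZMod p) - 1)
        = ((r - l + 1 : ℕ) : ZMod p) := by ring
    rw [e1, e2]
    have hlp : (l : ZMod p) ≠ 0 := by
      intro h0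
      rw [ZMod.natCast_eq_zero_iff] at h0
      have := Nat.le_of_dvd (by omega) h0
      omega
    have hlval : ((l : ZMod p)).val = l := ZMod.val_cast_of_lt (by omega)
    have hdval : (((r - l + 1 : ℕ) : ZMod p)).val = r - l + 1 := ZMod.val_cast_of_lt (by omega)
    rw [ZMod.val_add, ZMod.neg_val, if_neg hlp, hlval, hdval]
    set t := (u - w0).val
    have htlt : t < p := ZMod.val_lt _
    rcases Nat.lt_or_ge t l with h' | h'
    · rw [Nat.mod_eq_of_lt (by omega)]
      omega
    · have e3 : t + (p - l) = p + (t - l) := by omega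
      rw [e3, Nat.add_mod_left, Nat.mod_eq_of_lt (by omega)]
      omega

private lemma hard_step [Fintype X] {C : SimpleGraph X} {p : ℕ} [NeZero p] (hp3 : 3 ≤ p)
    {F : ZMod p → X} (hFb : Function.Bijective F)
    (hadj : ∀ i j : ZMod p, C.Adj (F i) (F j) ↔ j = i + 1 ∨ i = j + 1)
    {A1 B1 A2 B2 A3 B3 : Set X}
    (h1 : DisplaysSplit C s(A1, B1)) (h2 : DisplaysSplit C s(A2, B2))
    (h3 : DisplaysSplit C s(A3, B3))
    (hx : (A1 ∩ A2 ∩ A3).Nonempty) (hy : (B1 ∩ B2 ∩ A3).Nonempty)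
    (hz : (B1 ∩ A2 ∩ B3).Nonempty) :
    DisplaysSplit C s(B1 ∪ B2 ∩ B3, A1) ∧ DisplaysSplit C s(A2 ∪ A1 ∩ B3, B2) := by
  classical
  obtain ⟨x, ⟨hxA1, hxA2⟩, hxA3⟩ := hx
  obtain ⟨y, ⟨hyB1, hyB2⟩, hyA3⟩ := hy
  obtain ⟨z, ⟨hzB1, hzA2⟩, hzB3⟩ := hz
  obtain ⟨a1, c1, hac1, hA1s, hB1s⟩ :=
    (displays_iff hp3 hFb hadj ⟨x, hxA1⟩ ⟨y, hyB1⟩).mp h1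
  obtain ⟨a2, c2, hac2, hA2s, hB2s⟩ :=
    (displays_iff hp3 hFb hadj ⟨x, hxA2⟩ ⟨y, hyB2⟩).mp h2
  obtain ⟨a3, c3, hac3, hA3s, hB3s⟩ :=
    (displays_iff hp3 hFb hadj ⟨x, hxA3⟩ ⟨z, hzB3⟩).mp h3
  set idx : X → ZMod p := fun w => Classical.choose (hFb.2 w) with hidxdef
  have hidx : ∀ w : X, F (idx w) = w := fun w => Classical.choose_spec (hFb.2 w)
  have huniq : ∀ (u : ZMod p) (w : X), F u = w → u = idx w :=
    fun u w h => hFb.1 (h.trans (hidx w).symm)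
  set ψ : X → ℕ := fun w => (idx w - idx x).val with hψdef
  have hψlt : ∀ w, ψ w < p := fun w => ZMod.val_lt _
  -- translated side conditions
  have memA1 : ∀ w ∈ A1, inArc a1 c1 (idx w) := by
    intro w hw; obtain ⟨u, hu, hs⟩ := hA1s w hw; rwa [huniq u w hu] at hs
  have memB1 : ∀ w ∈ B1, ¬ inArc a1 c1 (idx w) := by
    intro w hw; obtain ⟨u, hu, hs⟩ := hB1s w hw; rwa [huniq u w hu] at hs
  have memA2 : ∀ w ∈ A2, inArc a2 c2 (idx w) := by
    intro w hw; obtain ⟨u, hu, hs⟩ := hA2s w hw; rwa [huniq u w hu] at hs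
  have memB2 : ∀ w ∈ B2, ¬ inArc a2 c2 (idx w) := by
    intro w hw; obtain ⟨u, hu, hs⟩ := hB2s w hw; rwa [huniq u w hu] at hs
  have memA3 : ∀ w ∈ A3, inArc a3 c3 (idx w) := by
    intro w hw; obtain ⟨u, hu, hs⟩ := hA3s w hw; rwa [huniq u w hu] at hs
  have memB3 : ∀ w ∈ B3, ¬ inArc a3 c3 (idx w) := by
    intro w hw; obtain ⟨u, hu, hs⟩ := hB3s w hw; rwa [huniq u w hu] at hs
  -- intervals for the complements
  obtain ⟨l1, r1, hl1, hlr1, hr1, hint1⟩ :=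
    interval_of_arc (w0 := idx x) hac1.symm
      (fun h => (arc_compl hac1 _).mp h (memA1 x hxA1))
  obtain ⟨l2, r2, hl2, hlr2, hr2, hint2⟩ :=
    interval_of_arc (w0 := idx x) hac2.symm
      (fun h => (arc_compl hac2 _).mp h (memA2 x hxA2))
  obtain ⟨l3, r3, hl3, hlr3, hr3, hint3⟩ :=
    interval_of_arc (w0 := idx x) hac3.symm
      (fun h => (arc_compl hac3 _).mp h (memA3 x hxA3))
  have hBint1 : ∀ w ∈ B1, l1 ≤ ψ w ∧ ψ w ≤ r1 :=
    fun w hw => (hint1 (idx w)).mp ((arc_compl hac1 _).mpr (memB1 w hw))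
  have hAint1 : ∀ w ∈ A1, ¬ (l1 ≤ ψ w ∧ ψ w ≤ r1) :=
    fun w hw h => (arc_compl hac1 _).mp ((hint1 (idx w)).mpr h) (memA1 w hw)
  have hBint2 : ∀ w ∈ B2, l2 ≤ ψ w ∧ ψ w ≤ r2 :=
    fun w hw => (hint2 (idx w)).mp ((arc_compl hac2 _).mpr (memB2 w hw))
  have hAint2 : ∀ w ∈ A2, ¬ (l2 ≤ ψ w ∧ ψ w ≤ r2) :=
    fun w hw h => (arc_compl hac2 _).mp ((hint2 (idx w)).mpr h) (memA2 w hw)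
  have hBint3 : ∀ w ∈ B3, l3 ≤ ψ w ∧ ψ w ≤ r3 :=
    fun w hw => (hint3 (idx w)).mp ((arc_compl hac3 _).mpr (memB3 w hw))
  have hAint3 : ∀ w ∈ A3, ¬ (l3 ≤ ψ w ∧ ψ w ≤ r3) :=
    fun w hw h => (arc_compl hac3 _).mp ((hint3 (idx w)).mpr h) (memA3 w hw)
  have hy1 := hBint1 y hyB1
  have hy2 := hBint2 y hyB2
  have hy3 := hAint3 y hyA3
  have hz1 := hBint1 z hzB1
  have hz2 := hAint2 z hzA2
  have hz3 := hBint3 z hzB3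
  constructor
  · -- s(B1 ∪ B2 ∩ B3, A1)
    by_cases hBB : (B2 ∩ B3).Nonempty
    · set T : Set ℕ := ψ '' (B2 ∩ B3) with hTdef
      have hTne : T.Nonempty := hBB.image _
      have hTbdd : BddAbove T := ⟨p, by
        rintro t ⟨w, _, rfl⟩
        exact (hψlt w).le⟩
      set L := sInf T with hLdef
      set R := sSup T with hRdef
      obtain ⟨bL, hbL, hbLψ⟩ := Nat.sInf_mem hTne
      obtain ⟨bR, hbR, hbRψ⟩ := Nat.sSup_mem hTne hTbdd
      have hbL2 := hBint2 bL hbL.1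
      have hbL3 := hBint3 bL hbL.2
      have hbR2 := hBint2 bR hbR.1
      have hbR3 := hBint3 bR hbR.2
      obtain ⟨lo, hlo1, hloL, hlo⟩ : ∃ lo, lo ≤ l1 ∧ lo ≤ L ∧ (l1 ≤ lo ∨ L ≤ lo) := by
        rcases le_total l1 L with h | h
        · exact ⟨l1, le_rfl, h, Or.inl le_rfl⟩
        · exact ⟨L, h, le_rfl, Or.inr le_rfl⟩
      obtain ⟨hi, hhi1, hhiR, hhi⟩ : ∃ hi, r1 ≤ hi ∧ R ≤ hi ∧ (hi ≤ r1 ∨ hi ≤ R) := by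
        rcases le_total r1 R with h | h
        · exact ⟨R, h, le_rfl, Or.inr le_rfl⟩
        · exact ⟨r1, le_rfl, h, Or.inl le_rfl⟩
      obtain ⟨a, c, hac, hint⟩ := arc_of_interval hp3 (idx x)
        (l := lo) (r := hi) (by omega) (by omega) (by omega)
      refine (displays_iff hp3 hFb hadj ⟨y, Or.inl hyB1⟩ ⟨x, hxA1⟩).mpr
        ⟨a, c, hac, ?_, ?_⟩
      · rintro w (hw | hw)
        · have hw1 := hBint1 w hw
          refine ⟨idx w, hidx w, (hint _).mpr ?_⟩
          have hlink : (idx w - idx x).val = ψ w := rfl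
          omega
        · have hmemT : ψ w ∈ T := ⟨w, hw, rfl⟩
          have hL' : L ≤ ψ w := Nat.sInf_le hmemT
          have hR' : ψ w ≤ R := le_csSup hTbdd hmemT
          refine ⟨idx w, hidx w, (hint _).mpr ?_⟩
          have hlink : (idx w - idx x).val = ψ w := rfl
          omega
      · intro w hw
        refine ⟨idx w, hidx w, fun hmem => ?_⟩
        have hwint := (hint _).mp hmem
        have hwA1 := hAint1 w hw
        have hlink : (idx w - idx x).val = ψ w := rfl
        omega
    · have hempty : B2 ∩ B3 = ∅ := Set.not_nonempty_iff_eq_empty.mp hBB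
      rw [hempty, Set.union_empty,
        show (s(B1, A1) : Sym2 (Set X)) = s(A1, B1) from Sym2.eq_swap]
      exact h1
  · -- s(A2 ∪ A1 ∩ B3, B2)
    set T : Set ℕ := ψ '' B2 with hTdef
    have hTne : T.Nonempty := ⟨ψ y, y, hyB2, rfl⟩
    have hTbdd : BddAbove T := ⟨p, by
      rintro t ⟨w, _, rfl⟩
      exact (hψlt w).le⟩
    set m := sInf T with hmdef
    set M := sSup T with hMdef
    obtain ⟨bm, hbm, hbmψ⟩ := Nat.sInf_mem hTne
    obtain ⟨bM, hbM, hbMψ⟩ := Nat.sSup_mem hTne hTbdd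
    have hbm2 := hBint2 bm hbm
    have hbM2 := hBint2 bM hbM
    have hym : m ≤ ψ y := Nat.sInf_le ⟨y, hyB2, rfl⟩
    have hyM : ψ y ≤ M := le_csSup hTbdd ⟨y, hyB2, rfl⟩
    obtain ⟨a, c, hac, hint⟩ := arc_of_interval hp3 (idx x)
      (l := m) (r := M) (by omega) (by omega) (by omega)
    rw [show (s(A2 ∪ A1 ∩ B3, B2) : Sym2 (Set X)) = s(B2, A2 ∪ A1 ∩ B3) from Sym2.eq_swap]
    refine (displays_iff hp3 hFb hadj ⟨y, hyB2⟩ ⟨x, Or.inl hxA2⟩).mpr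
      ⟨a, c, hac, ?_, ?_⟩
    · intro w hw
      have hmemT : ψ w ∈ T := ⟨w, hw, rfl⟩
      have h1' : m ≤ ψ w := Nat.sInf_le hmemT
      have h2' : ψ w ≤ M := le_csSup hTbdd hmemT
      refine ⟨idx w, hidx w, (hint _).mpr ?_⟩
      have hlink : (idx w - idx x).val = ψ w := rfl
      omega
    · rintro w (hw | ⟨hwA1, hwB3⟩)
      · refine ⟨idx w, hidx w, fun hmem => ?_⟩
        have hwint := (hint _).mp hmem
        have hwA2 := hAint2 w hw
        have hlink : (idx w - idx x).val = ψ w := rfl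
        omega
      · refine ⟨idx w, hidx w, fun hmem => ?_⟩
        have hwint := (hint _).mp hmem
        have hwa := hAint1 w hwA1
        have hwb := hBint3 w hwB3
        have hlink : (idx w - idx x).val = ψ w := rfl
        omega

/-- if `Σ, Σ' ∈ P(X)`, `C` is an `X`-cycle and `Σ'` is obtained from `Σ` by a
single application of the `Y`-rule, then `Σ` is displayed by `C` iff `Σ'` is displayed by `C`. -/
theorem statement6 {X : Type*} [Fintype X] (Sig Sig' : Set (Sym2 (Set X))) (C : SimpleGraph X)
    (hSig : InPX Sig) (hSig' : InPX Sig') (hC : IsXCycle C)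
    (hstep : yStep Sig Sig') :
    DisplaysColl C Sig ↔ DisplaysColl C Sig' := by
  classical
  obtain ⟨A1, B1, A2, B2, A3, B3, hm1, hm2, hm3, hne12, hne13, hne23, hyc, hSig'eq⟩ := hstep
  obtain ⟨hxne, hyne, hzne, hE⟩ := hyc
  obtain ⟨x, ⟨hxA1, hxA2⟩, hxA3⟩ := hxne
  obtain ⟨y, ⟨hyB1, hyB2⟩, hyA3⟩ := hyne
  obtain ⟨z, ⟨hzB1, hzA2⟩, hzB3⟩ := hzne
  obtain ⟨p, hpnz, F, hp3, hFb, hadj⟩ := exists_cycle_equiv C hC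
  haveI := hpnz
  constructor
  · intro hd S hS
    rw [hSig'eq] at hS
    obtain ⟨hS, -⟩ := hS
    rcases hS with hS | hS
    · exact hd S hS
    · have hh := hard_step hp3 hFb hadj (hd _ hm1) (hd _ hm2) (hd _ hm3)
        ⟨x, ⟨hxA1, hxA2⟩, hxA3⟩ ⟨y, ⟨hyB1, hyB2⟩, hyA3⟩ ⟨z, ⟨hzB1, hzA2⟩, hzB3⟩
      have hh2 := hard_step hp3 hFb hadj (hd _ hm1) (hd _ hm3) (hd _ hm2)
        ⟨x, ⟨hxA1, hxA3⟩, hxA2⟩ ⟨z, ⟨hzB1, hzB3⟩, hzA2⟩ ⟨y, ⟨hyB1, hyA3⟩, hyB2⟩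
      simp only [yOut, Set.mem_insert_iff, Set.mem_singleton_iff] at hS
      rcases hS with rfl | rfl | rfl
      · exact hh.1
      · exact hh.2
      · exact hh2.2
  · intro hd' S hS
    have hsub : S ∈ Sig ∪ yOut A1 B1 A2 B2 A3 B3 := Or.inl hS
    obtain ⟨T, hT, hText⟩ := exists_sreduce_extends _ hsub
    rw [← hSig'eq] at hT
    exact displaysSplit_of_extends (hd' T hT) hText
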